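/- Fix real numbers b ≥ 1 and c ≥ 1. For a > 1, let σ(a) = ∫ from 1/(ac) to a/c of 2/√(p_a(x)) dx, where p_a(x) = −(x − a/c)(x − 1/(ac))(x + bc)(x + c/b). Then σ(a) tends to 2πc/√(1 + (b + 1/b)c² + c⁴) as a tends to 1 from the right. -/

import Mathlib

open Real Filter Set MeasureTheory

noncomputable def auxX (c a t : ℝ) : ℝ := (a/c + 1/(a*c))/2 + ((a/c - 1/(a*c))/2) * t

noncomputable def auxG (b c a t : ℝ) : ℝ :=
  2 / (Real.sqrt (1 - t^2) * Real.sqrt ((auxX c a t + b*c) * (auxX c a t + c/b)))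

lemma auxX_one (c t : ℝ) : auxX c 1 t = 1/c := by
  simp only [auxX, one_mul]; ring

lemma auxQ_ge (b c x : ℝ) (hb : 1 ≤ b) (hc : 1 ≤ c) (hx : 0 < x) :
    1 ≤ (x + b*c) * (x + c/b) := by
  have hb0 : (0:ℝ) < b := lt_of_lt_of_le one_pos hb
  have hc0 : (0:ℝ) < c := lt_of_lt_of_le one_pos hc
  have h2 : (x + b*c) * (x + c/b) = x^2 + (b*c + c/b)*x + c^2 := by field_simp; ring
  nlinarith [sq_nonneg x, mul_pos (show (0:ℝ) < b*c + c/b by positivity) hx]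

lemma auxR_pos (c a : ℝ) (hc : 1 ≤ c) (ha : 1 < a) : 0 < (a/c - 1/(a*c))/2 := by
  have ha0 : (0:ℝ) < a := lt_trans one_pos ha
  have hc0 : (0:ℝ) < c := lt_of_lt_of_le one_pos hc
  have : 1/(a*c) < a/c := by
    rw [div_lt_div_iff₀ (by positivity) hc0]
    nlinarith [mul_lt_mul_of_pos_right (show (1:ℝ) < a*a by nlinarith) hc0]
  linarith

lemma auxX_pos (c a t : ℝ) (hc : 1 ≤ c) (ha : 1 < a) (ht : -1 ≤ t) : 0 < auxX c a t := by
  have ha0 : (0:ℝ) < a := lt_trans one_pos ha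
  have hc0 : (0:ℝ) < c := lt_of_lt_of_le one_pos hc
  have h1 : (0:ℝ) < 1/(a*c) := by positivity
  have hrp := auxR_pos c a hc ha
  have key : auxX c a t = 1/(a*c) + ((a/c - 1/(a*c))/2) * (t + 1) := by
    simp only [auxX]; ring
  rw [key]
  nlinarith

lemma aux_integrable : IntervalIntegrable (fun t : ℝ => 1 / Real.sqrt (1 - t^2)) volume (-1) 1 := by
  refine intervalIntegral.intervalIntegrable_deriv_of_nonneg (g := Real.arcsin) ?_ ?_ ?_
  · exact Real.continuous_arcsin.continuousOn
  · intro x hx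
    rw [min_eq_left (by norm_num : (-1:ℝ) ≤ 1), max_eq_right (by norm_num : (-1:ℝ) ≤ 1)] at hx
    exact Real.hasDerivAt_arcsin hx.1.ne' hx.2.ne
  · exact fun x hx => by positivity

lemma aux_integral : ∫ t in (-1:ℝ)..1, 1 / Real.sqrt (1 - t^2) = π := by
  rw [intervalIntegral.integral_eq_sub_of_hasDeriv_right_of_le (by norm_num)
    Real.continuous_arcsin.continuousOn
    (fun x hx => (Real.hasDerivAt_arcsin hx.1.ne' hx.2.ne).hasDerivWithinAt)
    aux_integrable]
  rw [Real.arcsin_one, Real.arcsin_neg_one]; ring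

-- Step A : substitution
lemma auxA (b c a : ℝ) (hb : 1 ≤ b) (hc : 1 ≤ c) (ha : 1 < a) :
    (∫ x in (1/(a*c))..(a/c),
        2 / Real.sqrt (-(x - a/c) * (x - 1/(a*c)) * (x + b*c) * (x + c/b)))
      = ∫ t in (-1:ℝ)..1, auxG b c a t := by
  have ha0 : (0:ℝ) < a := lt_trans one_pos ha
  have hc0 : (0:ℝ) < c := lt_of_lt_of_le one_pos hc
  set R : ℝ := (a/c - 1/(a*c))/2 with hR
  set M : ℝ := (a/c + 1/(a*c))/2 with hM
  have hrp : 0 < R := auxR_pos c a hc ha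
  have hrne : R ≠ 0 := ne_of_gt hrp
  have hlo : 1/(a*c) = R * (-1) + M := by rw [hR, hM]; ring
  have hhi : a/c = R * 1 + M := by rw [hR, hM]; ring
  calc (∫ x in (1/(a*c))..(a/c),
        2 / Real.sqrt (-(x - a/c) * (x - 1/(a*c)) * (x + b*c) * (x + c/b)))
      = ∫ x in (R * (-1) + M)..(R * 1 + M),
          2 / Real.sqrt (-(x - a/c) * (x - 1/(a*c)) * (x + b*c) * (x + c/b)) := by
        rw [← hlo, ← hhi]
    _ = R • ∫ t in (-1:ℝ)..1,
          2 / Real.sqrt (-((R * t + M) - a/c) * ((R * t + M) - 1/(a*c))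
            * ((R * t + M) + b*c) * ((R * t + M) + c/b)) :=
        (intervalIntegral.smul_integral_comp_mul_add
          (fun x => 2 / Real.sqrt (-(x - a/c) * (x - 1/(a*c)) * (x + b*c) * (x + c/b)))
          R M).symm
    _ = ∫ t in (-1:ℝ)..1, R *
          (2 / Real.sqrt (-((R * t + M) - a/c) * ((R * t + M) - 1/(a*c))
            * ((R * t + M) + b*c) * ((R * t + M) + c/b))) := by
        rw [smul_eq_mul, ← intervalIntegral.integral_const_mul]
    _ = ∫ t in (-1:ℝ)..1, auxG b c a t := by
        apply intervalIntegral.integral_congr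
        intro t ht
        rw [uIcc_of_le (by norm_num : (-1:ℝ) ≤ 1)] at ht
        have hXt : auxX c a t = R * t + M := by simp only [auxX, hR, hM]; ring
        have hxpos : 0 < R * t + M := hXt ▸ auxX_pos c a t hc ha ht.1
        have ht2 : 0 ≤ 1 - t^2 := by nlinarith [ht.1, ht.2]
        have key : -((R * t + M) - a/c) * ((R * t + M) - 1/(a*c))
            * ((R * t + M) + b*c) * ((R * t + M) + c/b)
            = (R^2 * (1 - t^2)) * (((R * t + M) + b*c) * ((R * t + M) + c/b)) := by
          have h1 : a/c = M + R := by rw [hR, hM]; ring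
          have h2 : 1/(a*c) = M - R := by rw [hR, hM]; ring
          rw [h1, h2]; ring
        beta_reduce
        rw [key, Real.sqrt_mul (by positivity), Real.sqrt_mul (sq_nonneg _),
          Real.sqrt_sq hrp.le]
        simp only [auxG, hXt]
        rw [show R * Real.sqrt (1 - t^2) * Real.sqrt ((R * t + M + b*c) * (R * t + M + c/b))
            = R * (Real.sqrt (1 - t^2) * Real.sqrt ((R * t + M + b*c) * (R * t + M + c/b)))
            by ring,
          ← div_div, mul_comm R]
        rw [div_div, mul_comm R, ← div_div, div_mul_cancel₀ _ hrne]

-- Step B : dominated convergence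
lemma auxB (b c : ℝ) (hb : 1 ≤ b) (hc : 1 ≤ c) :
    Tendsto (fun a => ∫ t in (-1:ℝ)..1, auxG b c a t) (nhdsWithin 1 (Set.Ioi 1))
      (nhds (∫ t in (-1:ℝ)..1, auxG b c 1 t)) := by
  have hb0 : (0:ℝ) < b := lt_of_lt_of_le one_pos hb
  have hc0 : (0:ℝ) < c := lt_of_lt_of_le one_pos hc
  apply intervalIntegral.tendsto_integral_filter_of_dominated_convergence
    (fun t => 2 / Real.sqrt (1 - t^2))
  · filter_upwards with a
    apply Measurable.aestronglyMeasurable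
    apply Measurable.div measurable_const
    simp only [auxX]
    fun_prop
  · filter_upwards [self_mem_nhdsWithin] with a (ha : a ∈ Set.Ioi 1)
    filter_upwards with t ht
    rw [uIoc_of_le (by norm_num : (-1:ℝ) ≤ 1)] at ht
    have hgnn : 0 ≤ auxG b c a t := by
      simp only [auxG]; positivity
    rw [Real.norm_of_nonneg hgnn]
    rcases eq_or_lt_of_le ht.2 with h1 | h1
    · subst h1; simp [auxG]
    · have h2 : 0 < 1 - t^2 := by nlinarith [ht.1]
      have hs : 0 < Real.sqrt (1 - t^2) := Real.sqrt_pos.2 h2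
      have hxp := auxX_pos c a t hc ha ht.1.le
      have hq : 1 ≤ Real.sqrt ((auxX c a t + b*c) * (auxX c a t + c/b)) := by
        rw [show (1:ℝ) = Real.sqrt 1 by simp]
        exact Real.sqrt_le_sqrt (auxQ_ge b c _ hb hc hxp) |>.trans_eq' (by simp)
      simp only [auxG]
      rw [div_le_div_iff₀ (by positivity) hs]
      nlinarith [hs.le]
  · have heq : (fun t : ℝ => 2 / Real.sqrt (1 - t^2))
        = fun t : ℝ => 2 * (1 / Real.sqrt (1 - t^2)) := by
      funext t; ring
    rw [heq]
    exact aux_integrable.const_mul 2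
  · filter_upwards with t ht
    rw [uIoc_of_le (by norm_num : (-1:ℝ) ≤ 1)] at ht
    rcases eq_or_lt_of_le ht.2 with h1 | h1
    · subst h1
      have : ∀ a : ℝ, auxG b c a 1 = 0 := by
        intro a; simp [auxG]
      simp only [this]
      exact tendsto_const_nhds
    · have h2 : 0 < 1 - t^2 := by nlinarith [ht.1]
      have hden1 : (0:ℝ) < Real.sqrt (1 - t^2) := Real.sqrt_pos.2 h2
      have hx1 : auxX c 1 t = 1/c := auxX_one c t
      have hQ1 : 0 < (auxX c 1 t + b*c) * (auxX c 1 t + c/b) :=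
        lt_of_lt_of_le one_pos (auxQ_ge b c _ hb hc (by rw [hx1]; positivity))
      have hcont : ContinuousAt (fun a : ℝ => auxG b c a t) 1 := by
        simp only [auxG, auxX]
        apply ContinuousAt.div continuousAt_const
        · apply ContinuousAt.mul continuousAt_const
          apply Real.continuous_sqrt.continuousAt.comp
          have hX : ContinuousAt (fun a : ℝ => (a/c + 1/(a*c))/2 + ((a/c - 1/(a*c))/2) * t) 1 := by
            have h0 : ContinuousAt (fun a : ℝ => 1/(a*c)) 1 :=
              ContinuousAt.div continuousAt_const
                (continuousAt_id.mul continuousAt_const) (by simp [hc0.ne'])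
            exact (((continuousAt_id.div_const c).add h0).div_const 2).add
              ((((continuousAt_id.div_const c).sub h0).div_const 2).mul continuousAt_const)
          exact (hX.add continuousAt_const).mul (hX.add continuousAt_const)
        · have hval : (1/c + 1/(1*c))/2 + ((1/c - 1/(1*c))/2) * t = 1/c := by
            rw [one_mul]; ring
          rw [hval]
          exact mul_ne_zero hden1.ne'
            (Real.sqrt_pos.2 (by positivity)).ne'
      exact hcont.tendsto.mono_left nhdsWithin_le_nhds

-- Step C : value at a = 1
lemma auxC (b c : ℝ) (hb : 1 ≤ b) (hc : 1 ≤ c) :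
    (∫ t in (-1:ℝ)..1, auxG b c 1 t)
      = 2 * Real.pi * c / Real.sqrt (1 + (b + 1/b) * c^2 + c^4) := by
  have hb0 : (0:ℝ) < b := lt_of_lt_of_le one_pos hb
  have hc0 : (0:ℝ) < c := lt_of_lt_of_le one_pos hc
  have hK : 1 ≤ (1/c + b*c) * (1/c + c/b) := auxQ_ge b c _ hb hc (by positivity)
  have hKs : 0 < Real.sqrt ((1/c + b*c) * (1/c + c/b)) :=
    Real.sqrt_pos.2 (lt_of_lt_of_le one_pos hK)
  have step1 : (∫ t in (-1:ℝ)..1, auxG b c 1 t)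
      = ∫ t in (-1:ℝ)..1,
          (2 / Real.sqrt ((1/c + b*c) * (1/c + c/b))) * (1 / Real.sqrt (1 - t^2)) := by
    apply intervalIntegral.integral_congr
    intro t ht
    simp only [auxG, auxX_one]
    rw [mul_comm (Real.sqrt (1 - t^2)), ← div_div, div_eq_mul_one_div]
  rw [step1, intervalIntegral.integral_const_mul, aux_integral]
  have hrel : 1 + (b + 1/b) * c^2 + c^4 = c^2 * ((1/c + b*c) * (1/c + c/b)) := by
    field_simp; ring
  rw [hrel, Real.sqrt_mul (sq_nonneg c), Real.sqrt_sq hc0.le]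
  rw [div_mul_eq_mul_div]
  rw [eq_div_iff (by positivity)]
  field_simp

theorem sigma_extends_to_a_eq_one (b c : ℝ) (hb : 1 ≤ b) (hc : 1 ≤ c) :
    Tendsto
      (fun a : ℝ =>
        ∫ x in (1/(a*c))..(a/c),
          2 / Real.sqrt (-(x - a/c) * (x - 1/(a*c)) * (x + b*c) * (x + c/b)))
      (nhdsWithin 1 (Set.Ioi 1))
      (nhds (2 * Real.pi * c / Real.sqrt (1 + (b + 1/b) * c^2 + c^4))) := by
  rw [← auxC b c hb hc]
  refine (auxB b c hb hc).congr' ?_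
  filter_upwards [self_mem_nhdsWithin] with a (ha : a ∈ Set.Ioi 1)
  exact (auxA b c a hb hc ha).symm
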